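/- Let m, n be coprime integers, and set M = m^8 - 4m^6n^2 + 10m^4n^4 - 4m^2n^6 + n^8 and N = m^8 - 4m^6n^2 - 6m^4n^4 - 4m^2n^6 + n^8. Then gcd(M, N) has no odd prime divisors; i.e., gcd(M, N) is a power of 2. -/

import Mathlib

theorem stmt11 (m n : ℤ) (hco : IsCoprime m n) :
    ∃ s : ℕ,
      Int.gcd (m^8 - 4*m^6*n^2 + 10*m^4*n^4 - 4*m^2*n^6 + n^8)
              (m^8 - 4*m^6*n^2 - 6*m^4*n^4 - 4*m^2*n^6 + n^8) = 2^s := by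
  set M : ℤ := m^8 - 4*m^6*n^2 + 10*m^4*n^4 - 4*m^2*n^6 + n^8 with hM
  set N : ℤ := m^8 - 4*m^6*n^2 - 6*m^4*n^4 - 4*m^2*n^6 + n^8 with hN
  set g : ℕ := Int.gcd M N with hg
  -- any prime dividing g is 2
  have hpdvd : ∀ {p : ℕ}, Nat.Prime p → p ∣ g → p = 2 := by
    intro p hp hpg
    by_contra hp2
    have hgi : ((g : ℤ)) ∣ M := Int.gcd_dvd_left M N
    have hgi' : ((g : ℤ)) ∣ N := Int.gcd_dvd_right M N
    have hpz : (p : ℤ) ∣ (g : ℤ) := Int.natCast_dvd_natCast.mpr hpg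
    have hpM : (p : ℤ) ∣ M := hpz.trans hgi
    have hpN : (p : ℤ) ∣ N := hpz.trans hgi'
    have hpi : Prime (p : ℤ) := Nat.prime_iff_prime_int.mp hp
    have hdiff : (p : ℤ) ∣ 16 * m^4 * n^4 := by
      have : M - N = 16 * m^4 * n^4 := by rw [hM, hN]; ring
      rw [← this]; exact dvd_sub hpM hpN
    have hp16 : ¬ (p : ℤ) ∣ 16 := by
      intro h
      have h16 : p ∣ 16 := by exact_mod_cast h
      have : p ∣ 2 := hp.dvd_of_dvd_pow (n := 4) (by norm_num at h16 ⊢; exact h16)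
      exact hp2 ((Nat.prime_dvd_prime_iff_eq hp Nat.prime_two).mp this)
    have hmn : (p : ℤ) ∣ m ∨ (p : ℤ) ∣ n := by
      rcases (hpi.dvd_mul.mp hdiff) with h | h
      · rcases (hpi.dvd_mul.mp h) with h' | h'
        · exact absurd h' hp16
        · exact Or.inl (hpi.dvd_of_dvd_pow h')
      · exact Or.inr (hpi.dvd_of_dvd_pow h)
    have hboth : (p : ℤ) ∣ m ∧ (p : ℤ) ∣ n := by
      rcases hmn with h | h
      · refine ⟨h, hpi.dvd_of_dvd_pow (n := 8) ?_⟩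
        have : (n : ℤ)^8 = M - (m^8 - 4*m^6*n^2 + 10*m^4*n^4 - 4*m^2*n^6) := by
          rw [hM]; ring
        rw [this]
        exact dvd_sub hpM ((dvd_pow h two_ne_zero).trans
          ⟨m^6 - 4*m^4*n^2 + 10*m^2*n^4 - 4*n^6, by ring⟩)
      · refine ⟨hpi.dvd_of_dvd_pow (n := 8) ?_, h⟩
        have : (m : ℤ)^8 = M - (- 4*m^6*n^2 + 10*m^4*n^4 - 4*m^2*n^6 + n^8) := by
          rw [hM]; ring
        rw [this]
        exact dvd_sub hpM ((dvd_pow h two_ne_zero).trans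
          ⟨-4*m^6 + 10*m^4*n^2 - 4*m^2*n^4 + n^6, by ring⟩)
    obtain ⟨a, b, hab⟩ := hco
    have : (p : ℤ) ∣ 1 := by
      rw [← hab]
      exact dvd_add (Dvd.dvd.mul_left hboth.1 a) (Dvd.dvd.mul_left hboth.2 b)
    exact hpi.not_unit (isUnit_of_dvd_one this)
  -- g ≠ 0
  have hg0 : g ≠ 0 := by
    intro h0
    have hM0 : M = 0 := by
      have := Int.gcd_eq_zero_iff.mp (hg ▸ h0)
      exact this.1
    have hN0 : N = 0 := (Int.gcd_eq_zero_iff.mp (hg ▸ h0)).2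
    have hdiff : (16 : ℤ) * m^4 * n^4 = 0 := by
      have : M - N = 16 * m^4 * n^4 := by rw [hM, hN]; ring
      rw [← this, hM0, hN0]; ring
    have : m = 0 ∨ n = 0 := by
      rcases mul_eq_zero.mp hdiff with h | h
      · rcases mul_eq_zero.mp h with h' | h'
        · norm_num at h'
        · exact Or.inl (pow_eq_zero_iff (by norm_num)|>.mp h')
      · exact Or.inr (pow_eq_zero_iff (by norm_num)|>.mp h)
    rcases this with h | h
    · subst h
      have hu : IsUnit n := isCoprime_zero_left.mp hco
      rcases Int.isUnit_iff.mp hu with h1 | h1 <;> subst h1 <;> simp [hM] at hM0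
    · subst h
      have hu : IsUnit m := isCoprime_zero_right.mp hco
      rcases Int.isUnit_iff.mp hu with h1 | h1 <;> subst h1 <;> simp [hM] at hM0
  exact ⟨g.primeFactorsList.length, Nat.eq_prime_pow_of_unique_prime_dvd hg0 hpdvd⟩
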